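/- For any d ≥ 2 and any (possibly randomized) stopping rule τ for the noise-free linear prophet problem, there exist deterministic feature vectors x_1,...,x_n ∈ R^d (with x_i the i-th standard basis vector for i ≤ d and x_i = 0 for i > d) and a parameter θ ∈ R^d with nonnegative entries such that E[x_τᵀθ] / max_{i∈[n]} x_iᵀθ ≤ 1/d. The construction: since Σ_{i=1}^d P(τ = i) ≤ 1, there exists a coordinate i* ≤ d with P(τ = i*) ≤ 1/d; choosing θ to concentrate its mass on coordinate i* (with the preceding coordinates geometrically smaller by a factor ε → 0) forces the ratio to at most 1/d. -/

import Mathlib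

open MeasureTheory ProbabilityTheory

/-- Noise-free linear prophet lower bound. Features are deterministic:
`x_i = e_i` (the `i`-th standard basis vector) for stages `i ∈ {1,...,d}` and `x_i = 0` for
`i > d`, so the reward at stage `i ≤ d` is the coordinate `θ i` and the reward at later
stages is `0`. A (possibly randomized) stopping rule is a family `τ θ : Ω → ℕ` which may
depend on the unknown parameter `θ` only through the observed rewards: the decision
`{τ θ = i}` depends only on `θ 1, ..., θ i` (non-anticipation). Then, for any such rule,
there exists a nonnegative parameter `θ` supported on `{1,...,d}` with positive maximal
reward such that `E[x_τᵀθ] ≤ (1/d) · max_{i∈[n]} x_iᵀθ`. -/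
theorem stmt_12 {Ω : Type*} [MeasureSpace Ω] [IsProbabilityMeasure (ℙ : Measure Ω)]
    (d n : ℕ) (hd : 2 ≤ d) (hn : d ≤ n)
    (τ : (ℕ → ℝ) → Ω → ℕ)
    (hτmeas : ∀ θ, Measurable (τ θ))
    (hτrange : ∀ θ ω, τ θ ω ∈ Finset.Icc 1 (n + 1))
    -- non-anticipation: the stopping decision at stage i depends on θ only through θ 1,...,θ i
    (hadapt : ∀ i : ℕ, ∀ θ θ' : ℕ → ℝ, (∀ j ≤ i, θ j = θ' j) →
      ∀ ω, (τ θ ω = i ↔ τ θ' ω = i)) :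
    ∃ θ : ℕ → ℝ,
      (∀ j, 0 ≤ θ j) ∧
      (∀ j, j ∉ Finset.Icc 1 d → θ j = 0) ∧
      (0 < ⨆ i ∈ Finset.Icc 1 n, (if i ≤ d then θ i else 0)) ∧
      (∫ ω, (if τ θ ω ≤ d then θ (τ θ ω) else 0) ∂ℙ)
        ≤ (1 / d) * ⨆ i ∈ Finset.Icc 1 n, (if i ≤ d then θ i else 0) := by
  classical
  have hd0 : (0:ℝ) < d := by positivity
  -- the stopping probabilities
  set p : (ℕ → ℝ) → ℕ → ℝ := fun θ j => (ℙ {ω | τ θ ω = j}).toReal with hp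
  have hmeasS : ∀ (θ : ℕ → ℝ) (j : ℕ), MeasurableSet {ω | τ θ ω = j} :=
    fun θ j => hτmeas θ (measurableSet_singleton j)
  have hpnn : ∀ θ j, 0 ≤ p θ j := fun θ j => ENNReal.toReal_nonneg
  -- agreement transfer
  have hagree : ∀ (θ θ' : ℕ → ℝ) (j : ℕ), (∀ i ≤ j, θ i = θ' i) → p θ j = p θ' j := by
    intro θ θ' j h
    have : {ω | τ θ ω = j} = {ω | τ θ' ω = j} := Set.ext fun ω => hadapt j θ θ' h ω
    simp [hp, this]
  -- the stopping probabilities on stages 1..d sum to at most 1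
  have hsum1 : ∀ θ : ℕ → ℝ, ∑ j ∈ Finset.Icc 1 d, p θ j ≤ 1 := by
    intro θ
    have hdisj : (↑(Finset.Icc 1 d) : Set ℕ).PairwiseDisjoint
        (fun j => {ω | τ θ ω = j}) := by
      intro a _ b _ hab
      refine Set.disjoint_left.2 fun ω ha hb => hab ?_
      exact ha.symm.trans hb
    have hU : ℙ (⋃ j ∈ Finset.Icc 1 d, {ω | τ θ ω = j})
        = ∑ j ∈ Finset.Icc 1 d, ℙ {ω | τ θ ω = j} :=
      measure_biUnion_finset hdisj (fun j _ => hmeasS θ j)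
    have h1 : ∑ j ∈ Finset.Icc 1 d, ℙ {ω | τ θ ω = j} ≤ 1 := hU ▸ prob_le_one
    calc ∑ j ∈ Finset.Icc 1 d, p θ j
        = (∑ j ∈ Finset.Icc 1 d, ℙ {ω | τ θ ω = j}).toReal := by
          rw [ENNReal.toReal_sum (fun j _ => measure_ne_top _ _)]
      _ ≤ (1 : ENNReal).toReal := ENNReal.toReal_mono ENNReal.one_ne_top h1
      _ = 1 := by simp
  -- the integral computation
  have hint : ∀ θ : ℕ → ℝ,
      (∫ ω, (if τ θ ω ≤ d then θ (τ θ ω) else 0) ∂ℙ)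
        = ∑ j ∈ Finset.Icc 1 d, θ j * p θ j := by
    intro θ
    have hfun : (fun ω => if τ θ ω ≤ d then θ (τ θ ω) else 0)
        = fun ω => ∑ j ∈ Finset.Icc 1 d,
            Set.indicator {ω' | τ θ ω' = j} (fun _ => θ j) ω := by
      funext ω
      by_cases h : τ θ ω ≤ d
      · have h1 : 1 ≤ τ θ ω := (Finset.mem_Icc.1 (hτrange θ ω)).1
        have hmem : τ θ ω ∈ Finset.Icc 1 d := Finset.mem_Icc.2 ⟨h1, h⟩
        rw [if_pos h, Finset.sum_eq_single_of_mem (τ θ ω) hmem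
          (fun j _ hne => Set.indicator_of_notMem (fun hc => hne (hc.symm)) _)]
        exact (Set.indicator_of_mem rfl _).symm
      · rw [if_neg h]
        refine (Finset.sum_eq_zero fun j hj => ?_).symm
        refine Set.indicator_of_notMem (fun hc => ?_) _
        exact h (hc ▸ (Finset.mem_Icc.1 hj).2)
    rw [hfun, integral_finset_sum _
      (fun j _ => (integrable_const (θ j)).indicator (hmeasS θ j))]
    refine Finset.sum_congr rfl fun j _ => ?_
    rw [integral_indicator_const _ (hmeasS θ j), smul_eq_mul, mul_comm]
    rfl
  -- lower bound on the supremum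
  have hsup : ∀ (θ : ℕ → ℝ), (∀ j, 0 ≤ θ j) → ∀ k, 1 ≤ k → k ≤ d →
      θ k ≤ ⨆ i ∈ Finset.Icc 1 n, (if i ≤ d then θ i else 0) := by
    intro θ hθnn k hk1 hkd
    set B : ℝ := ∑ j ∈ Finset.Icc 1 d, θ j with hB
    have hgB : ∀ i : ℕ, (if i ≤ d then θ i else 0) ≤ B ∨ i = 0 := by
      intro i
      rcases Nat.eq_zero_or_pos i with h0 | h1
      · exact Or.inr h0
      refine Or.inl ?_
      by_cases h : i ≤ d
      · rw [if_pos h]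
        exact Finset.single_le_sum (fun j _ => hθnn j) (Finset.mem_Icc.2 ⟨h1, h⟩)
      · rw [if_neg h]
        exact Finset.sum_nonneg fun j _ => hθnn j
    have hBnn : 0 ≤ B := Finset.sum_nonneg fun j _ => hθnn j
    have hbdd : BddAbove (Set.range fun i : ℕ =>
        ⨆ _ : i ∈ Finset.Icc 1 n, (if i ≤ d then θ i else 0)) := by
      refine ⟨B, ?_⟩
      rintro x ⟨i, rfl⟩
      dsimp only
      by_cases hi : i ∈ Finset.Icc 1 n
      · haveI : Nonempty (i ∈ Finset.Icc 1 n) := ⟨hi⟩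
        rw [ciSup_const]
        rcases hgB i with h | h
        · exact h
        · exact absurd hi (by simp [h])
      · haveI : IsEmpty (i ∈ Finset.Icc 1 n) := ⟨hi⟩
        rw [Real.iSup_of_isEmpty]
        exact hBnn
    have hkmem : k ∈ Finset.Icc 1 n := Finset.mem_Icc.2 ⟨hk1, le_trans hkd hn⟩
    refine le_ciSup_of_le hbdd k ?_
    haveI : Nonempty (k ∈ Finset.Icc 1 n) := ⟨hkmem⟩
    rw [ciSup_const, if_pos hkd]
  -- success lemma: a good θ supported on 1..k with small expected reward works
  have hsucc : ∀ (θ : ℕ → ℝ) (k : ℕ), 1 ≤ k → k ≤ d →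
      (∀ j, 0 ≤ θ j) → (∀ j, j ∉ Finset.Icc 1 k → θ j = 0) → 0 < θ k →
      (∑ j ∈ Finset.Icc 1 d, θ j * p θ j) ≤ θ k / d →
      (∃ θ : ℕ → ℝ,
        (∀ j, 0 ≤ θ j) ∧
        (∀ j, j ∉ Finset.Icc 1 d → θ j = 0) ∧
        (0 < ⨆ i ∈ Finset.Icc 1 n, (if i ≤ d then θ i else 0)) ∧
        (∫ ω, (if τ θ ω ≤ d then θ (τ θ ω) else 0) ∂ℙ)
          ≤ (1 / d) * ⨆ i ∈ Finset.Icc 1 n, (if i ≤ d then θ i else 0)) := by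
    intro θ k hk1 hkd hθnn hθsupp hθk hE
    have hsupk := hsup θ hθnn k hk1 hkd
    refine ⟨θ, hθnn, ?_, lt_of_lt_of_le hθk hsupk, ?_⟩
    · intro j hj
      refine hθsupp j fun hjk => hj ?_
      rw [Finset.mem_Icc] at hjk ⊢
      exact ⟨hjk.1, le_trans hjk.2 hkd⟩
    · rw [hint θ]
      calc ∑ j ∈ Finset.Icc 1 d, θ j * p θ j ≤ θ k / d := hE
        _ = (1 / d) * θ k := by ring
        _ ≤ (1 / d) * ⨆ i ∈ Finset.Icc 1 n, (if i ≤ d then θ i else 0) := by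
            apply mul_le_mul_of_nonneg_left hsupk
            positivity
  -- main argument by contradiction
  by_contra hcon
  -- failure lemma
  have hfail : ∀ (θ : ℕ → ℝ) (k : ℕ), 1 ≤ k → k ≤ d →
      (∀ j, 0 ≤ θ j) → (∀ j, j ∉ Finset.Icc 1 (k-1) → θ j = 0) →
      ∀ t : ℝ, 0 < t →
      t / d < ∑ j ∈ Finset.Icc 1 d,
        (Function.update θ k t) j * p (Function.update θ k t) j := by
    intro θ k hk1 hkd hθnn hθsupp t ht
    by_contra hle
    push_neg at hle
    set θ' : ℕ → ℝ := Function.update θ k t with hθ'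
    have hθ'k : θ' k = t := Function.update_self k t θ
    have hθ'nn : ∀ j, 0 ≤ θ' j := by
      intro j
      by_cases h : j = k
      · rw [h, hθ'k]; exact le_of_lt ht
      · rw [hθ', Function.update_of_ne h]; exact hθnn j
    have hθ'supp : ∀ j, j ∉ Finset.Icc 1 k → θ' j = 0 := by
      intro j hj
      have hjk : j ≠ k := by
        intro h; exact hj (by rw [h]; exact Finset.mem_Icc.2 ⟨hk1, le_rfl⟩)
      rw [hθ', Function.update_of_ne hjk]
      refine hθsupp j fun hmem => hj ?_
      rw [Finset.mem_Icc] at hmem ⊢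
      exact ⟨hmem.1, le_trans hmem.2 (Nat.sub_le k 1)⟩
    exact hcon (hsucc θ' k hk1 hkd hθ'nn hθ'supp (hθ'k ▸ ht) (hθ'k ▸ hle))
  -- the induction
  have hind : ∀ k, 1 ≤ k → k ≤ d → ∃ θ : ℕ → ℝ,
      (∀ j, 0 ≤ θ j) ∧ (∀ j, j ∉ Finset.Icc 1 k → θ j = 0) ∧
      (k : ℝ)/d < ∑ j ∈ Finset.Icc 1 k, p θ j := by
    intro k hk1
    induction k, hk1 using Nat.le_induction with
    | base =>
      intro h1d
      set θ' : ℕ → ℝ := Function.update (fun _ => (0:ℝ)) 1 1 with hθ'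
      have key := hfail (fun _ => (0:ℝ)) 1 le_rfl h1d (fun _ => le_rfl)
        (fun _ _ => rfl) 1 one_pos
      have hsplit : ∑ j ∈ Finset.Icc 1 d, θ' j * p θ' j
          = θ' 1 * p θ' 1 := by
        refine Finset.sum_eq_single_of_mem 1 (Finset.mem_Icc.2 ⟨le_rfl, h1d⟩)
          (fun j _ hj1 => ?_)
        rw [hθ', Function.update_of_ne hj1]
        simp
      rw [hsplit] at key
      have hθ'1 : θ' 1 = 1 := Function.update_self 1 1 _
      rw [hθ'1, one_mul] at key
      refine ⟨θ', fun j => ?_, fun j hj => ?_, ?_⟩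
      · by_cases h : j = 1
        · rw [h, hθ'1]; norm_num
        · rw [hθ', Function.update_of_ne h]
      · have hj1 : j ≠ 1 := fun h => hj (h ▸ (by simp))
        rw [hθ', Function.update_of_ne hj1]
      · rw [Finset.Icc_self, Finset.sum_singleton]
        simpa using key
    | succ k hk1 ih =>
      intro hkd
      have hkd' : k ≤ d := le_trans (Nat.le_succ k) hkd
      obtain ⟨θ, hθnn, hθsupp, hS⟩ := ih (le_trans (Nat.le_succ k) hkd)
      set A : ℝ := ∑ j ∈ Finset.Icc 1 k, θ j * p θ j with hA
      have hAnn : 0 ≤ A := Finset.sum_nonneg fun j _ =>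
        mul_nonneg (hθnn j) (hpnn θ j)
      set E : ℝ := (∑ j ∈ Finset.Icc 1 k, p θ j) - (k:ℝ)/d with hEdef
      have hEpos : 0 < E := by rw [hEdef]; linarith
      set t : ℝ := 2*A/E + 1 with htdef
      have ht : 0 < t := by positivity
      have hAt : A / t ≤ E / 2 := by
        rw [div_le_div_iff₀ ht (by norm_num)]
        have : E * t = 2*A + E := by
          rw [htdef]; field_simp
        nlinarith
      have hθsupp' : ∀ j, j ∉ Finset.Icc 1 ((k+1)-1) → θ j = 0 := by
        simpa using hθsupp
      have key := hfail θ (k+1) (Nat.le_add_left 1 k) hkd hθnn hθsupp' t ht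
      set θ' : ℕ → ℝ := Function.update θ (k+1) t with hθ'
      -- p θ' j = p θ j for j ≤ k
      have hpeq : ∀ j ∈ Finset.Icc 1 k, p θ' j = p θ j := by
        intro j hj
        refine (hagree θ' θ j fun i hi => ?_)
        have : i ≠ k + 1 := by
          have := (Finset.mem_Icc.1 hj).2
          omega
        rw [hθ', Function.update_of_ne this]
      -- decompose the sum from key
      have hsplit : ∑ j ∈ Finset.Icc 1 d, θ' j * p θ' j
          = A + t * p θ' (k+1) := by
        have h1 : ∑ j ∈ Finset.Icc 1 d, θ' j * p θ' j
            = ∑ j ∈ Finset.Icc 1 (k+1), θ' j * p θ' j := by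
          refine (Finset.sum_subset (Finset.Icc_subset_Icc_right hkd)
            fun j hjd hjk => ?_).symm
          have hjne : j ≠ k+1 := by
            intro h
            exact hjk (by rw [h]; exact Finset.mem_Icc.2 ⟨by omega, le_rfl⟩)
          have : θ' j = 0 := by
            rw [hθ', Function.update_of_ne hjne]
            refine hθsupp j fun hmem => hjk ?_
            rw [Finset.mem_Icc] at hmem ⊢
            exact ⟨hmem.1, le_trans hmem.2 (Nat.le_succ k)⟩
          rw [this, zero_mul]
        rw [h1, Finset.sum_Icc_succ_top (Nat.le_add_left 1 k)]
        congr 1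
        · rw [hA]
          refine Finset.sum_congr rfl fun j hj => ?_
          have hjne : j ≠ k+1 := by
            have := (Finset.mem_Icc.1 hj).2; omega
          rw [hpeq j hj, hθ', Function.update_of_ne hjne]
        · rw [show θ' (k+1) = t from Function.update_self (k+1) t θ]
      rw [hsplit] at key
      -- so p θ' (k+1) > 1/d - A/t ≥ 1/d - E/2
      have hQ : 1/(d:ℝ) - E/2 < p θ' (k+1) := by
        have h2 : t / (d:ℝ) - A < t * p θ' (k+1) := by linarith
        have h4 : A ≤ t * (E/2) := by
          have h5 : t * (A/t) ≤ t * (E/2) := mul_le_mul_of_nonneg_left hAt (le_of_lt ht)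
          have h6 : t * (A/t) = A := by field_simp
          linarith
        have h3 : t * (1/(d:ℝ) - E/2) ≤ t / (d:ℝ) - A := by
          have h7 : t * (1/(d:ℝ) - E/2) = t/(d:ℝ) - t*(E/2) := by ring
          rw [h7]; linarith
        exact (mul_lt_mul_iff_right₀ ht).1 (lt_of_le_of_lt h3 h2)
      refine ⟨θ', ?_, ?_, ?_⟩
      · intro j
        by_cases h : j = k+1
        · rw [h, hθ', Function.update_self]; exact le_of_lt ht
        · rw [hθ', Function.update_of_ne h]; exact hθnn j
      · intro j hj
        have hjne : j ≠ k+1 := by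
          intro h
          exact hj (by rw [h]; exact Finset.mem_Icc.2 ⟨by omega, le_rfl⟩)
        rw [hθ', Function.update_of_ne hjne]
        refine hθsupp j fun hmem => hj ?_
        rw [Finset.mem_Icc] at hmem ⊢
        exact ⟨hmem.1, le_trans hmem.2 (Nat.le_succ k)⟩
      · rw [Finset.sum_Icc_succ_top (Nat.le_add_left 1 k)]
        have hsame : ∑ j ∈ Finset.Icc 1 k, p θ' j = ∑ j ∈ Finset.Icc 1 k, p θ j :=
          Finset.sum_congr rfl hpeq
        rw [hsame]
        have : ((k:ℝ)+1)/d = (k:ℝ)/d + 1/d := by ring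
        push_cast
        rw [this]
        have hSk : ∑ j ∈ Finset.Icc 1 k, p θ j = (k:ℝ)/d + E := by
          rw [hEdef]; ring
        linarith
  -- final contradiction
  obtain ⟨θ, _, _, hgt⟩ := hind d (le_trans one_le_two hd) le_rfl
  have h1 : (d:ℝ)/d = 1 := div_self (ne_of_gt hd0)
  rw [h1] at hgt
  exact absurd (hsum1 θ) (not_le.2 hgt)
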